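/- Let X_1, …, X_n (n ≥ 2) be mutually independent nonnegative random variables with survival functions F̄_1, …, F̄_n, and let θ = (θ_1, …, θ_n) ∈ Δ_n. Then for every x ≥ 0 with the property that for each index i ∈ {1,…,n} and every proper subset μ of {1,…,n} containing i one has θ_μ · F̄_i(x) ≤ F̄_i(x/θ_μ) (where θ_μ = Σ_{j∈μ} θ_j), it holds that P(θ_1 X_1 + ⋯ + θ_n X_n > x) ≥ θ_1 P(X_1 > x) + ⋯ + θ_n P(X_n > x). -/

import Mathlib

open MeasureTheory ProbabilityTheory Set

namespace DSLB

lemma fract_sub_of_le {a b : ℝ} (h : Int.fract b ≤ Int.fract a) :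
    Int.fract (a - b) = Int.fract a - Int.fract b := by
  have h1 : Int.fract (a - b) = Int.fract (Int.fract a - Int.fract b) := by
    rw [Int.fract_eq_fract]
    refine ⟨⌊a⌋ - ⌊b⌋, ?_⟩
    push_cast
    unfold Int.fract
    ring
  rw [h1, Int.fract_eq_self.2 ⟨by linarith, by
    have := Int.fract_lt_one a
    have := Int.fract_nonneg b
    linarith⟩]

lemma fract_sub_sub (p r : ℝ) : Int.fract ((p - r)) = Int.fract (Int.fract p - Int.fract r) := by
  rw [Int.fract_eq_fract]
  exact ⟨⌊p⌋ - ⌊r⌋, by push_cast; unfold Int.fract; ring⟩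

/-- rotation invariance of Lebesgue measure on `[0,1)` for the `fract (· - u)` map. -/
lemma rot_measure (u : ℝ) {B : Set ℝ} (hB : MeasurableSet B) :
    volume {s | s ∈ Ico (0:ℝ) 1 ∧ Int.fract (s - u) ∈ B} = volume (B ∩ Ico 0 1) := by
  -- reduce to u ∈ [0,1)
  have key : ∀ c : ℝ, 0 ≤ c → c < 1 →
      volume {s | s ∈ Ico (0:ℝ) 1 ∧ Int.fract (s - c) ∈ B} = volume (B ∩ Ico 0 1) := by
    intro c hc0 hc1
    have hdecomp : {s | s ∈ Ico (0:ℝ) 1 ∧ Int.fract (s - c) ∈ B}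
        = ((fun s => s - c) ⁻¹' (B ∩ Ico 0 (1 - c)) ∩ Ico c 1)
          ∪ ((fun s => s + (1 - c)) ⁻¹' (B ∩ Ico (1-c) 1) ∩ Ico 0 c) := by
      ext s
      simp only [Set.mem_setOf_eq, Set.mem_union, Set.mem_inter_iff, Set.mem_preimage,
        Set.mem_Ico]
      constructor
      · rintro ⟨⟨hs0, hs1⟩, hsB⟩
        rcases le_or_gt c s with hcs | hcs
        · left
          have hf : Int.fract (s - c) = s - c := Int.fract_eq_self.2 ⟨by linarith, by linarith⟩
          rw [hf] at hsB
          exact ⟨⟨hsB, by linarith, by linarith⟩, hcs, hs1⟩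
        · right
          have hf : Int.fract (s - c) = s - c + 1 := by
            have : Int.fract (s - c) = Int.fract (s - c + 1) := (Int.fract_add_one _).symm
            rw [this, Int.fract_eq_self.2 ⟨by linarith, by linarith⟩]
          rw [hf] at hsB
          refine ⟨⟨?_, by constructor <;> linarith⟩, hs0, hcs⟩
          have he : s + (1 - c) = s - c + 1 := by ring
          rw [he]; exact hsB
      · rintro (⟨⟨hsB, h1, h2⟩, h3, h4⟩ | ⟨⟨hsB, h1, h2⟩, h3, h4⟩)
        · have hf : Int.fract (s - c) = s - c := Int.fract_eq_self.2 ⟨by linarith, by linarith⟩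
          exact ⟨⟨by linarith, by linarith⟩, by rw [hf]; exact hsB⟩
        · have hf : Int.fract (s - c) = s - c + 1 := by
            rw [← Int.fract_add_one (s - c), Int.fract_eq_self.2 ⟨by linarith, by linarith⟩]
          refine ⟨⟨h3, by linarith⟩, ?_⟩
          rw [hf]; convert hsB using 1; ring
    have hsub1 : (fun s => s - c) ⁻¹' (B ∩ Ico 0 (1 - c)) ⊆ Ico c 1 := by
      intro y hy
      simp only [Set.mem_preimage, Set.mem_inter_iff, Set.mem_Ico] at hy
      exact ⟨by linarith [hy.2.1], by linarith [hy.2.2]⟩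
    have hsub2 : (fun s => s + (1 - c)) ⁻¹' (B ∩ Ico (1-c) 1) ⊆ Ico 0 c := by
      intro y hy
      simp only [Set.mem_preimage, Set.mem_inter_iff, Set.mem_Ico] at hy
      exact ⟨by linarith [hy.2.1], by linarith [hy.2.2]⟩
    rw [Set.inter_eq_self_of_subset_left hsub1, Set.inter_eq_self_of_subset_left hsub2] at hdecomp
    have hm1 : MeasurableSet ((fun s => s - c) ⁻¹' (B ∩ Ico 0 (1 - c))) :=
      (hB.inter measurableSet_Ico).preimage (measurable_id.sub measurable_const)
    have hm2 : MeasurableSet ((fun s => s + (1 - c)) ⁻¹' (B ∩ Ico (1-c) 1)) :=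
      (hB.inter measurableSet_Ico).preimage (measurable_id.add measurable_const)
    have hdisj : Disjoint ((fun s => s - c) ⁻¹' (B ∩ Ico 0 (1 - c)))
        ((fun s => s + (1 - c)) ⁻¹' (B ∩ Ico (1-c) 1)) := by
      refine Set.disjoint_left.2 fun y hy1 hy2 => ?_
      have h1 := hsub1 hy1
      have h2 := hsub2 hy2
      simp only [Set.mem_Ico] at h1 h2
      linarith [h1.1, h2.2]
    rw [hdecomp, measure_union hdisj hm2]
    have e1 : (fun s => s - c) = (fun s : ℝ => -c + s) := by funext s; ring
    have e2 : (fun s => s + (1 - c)) = (fun s : ℝ => (1 - c) + s) := by funext s; ring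
    rw [e1, e2, measure_preimage_add, measure_preimage_add]
    rw [show B ∩ Ico (0:ℝ) 1 = (B ∩ Ico 0 (1-c)) ∪ (B ∩ Ico (1-c) 1) by
      rw [← Set.inter_union_distrib_left, Ico_union_Ico_eq_Ico (by linarith) (by linarith)]]
    rw [measure_union ?_ (hB.inter measurableSet_Ico)]
    refine Set.disjoint_left.2 fun y hy1 hy2 => ?_
    simp only [Set.mem_inter_iff, Set.mem_Ico] at hy1 hy2
    linarith [hy1.2.2, hy2.2.1]
  have hfr : ∀ s : ℝ, Int.fract (s - u) = Int.fract (s - Int.fract u) := by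
    intro s
    rw [Int.fract_eq_fract]
    exact ⟨-⌊u⌋, by unfold Int.fract; push_cast; ring⟩
  simp only [hfr]
  exact key _ (Int.fract_nonneg u) (Int.fract_lt_one u)


/-- lower bound for the measure of an "arc" `{u ∈ [0,1) : fract (c - u) < a}`. -/
lemma arc_vol {c a : ℝ} (ha0 : 0 < a) (ha1 : a ≤ 1) :
    ENNReal.ofReal a ≤ volume {u | u ∈ Ico (0:ℝ) 1 ∧ Int.fract (c - u) < a} := by
  set c' := Int.fract c with hc'
  have hc'0 : 0 ≤ c' := Int.fract_nonneg c
  have hc'1 : c' < 1 := Int.fract_lt_one c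
  have hfr : ∀ u : ℝ, Int.fract (c - u) = Int.fract (c' - u) := by
    intro u
    rw [Int.fract_eq_fract]
    refine ⟨⌊c⌋, ?_⟩
    have h := Int.self_sub_fract c
    rw [hc']; linarith
  have hsub : Ioc (max (c' - a) 0) c' ∪ Ioo (max (1 + c' - a) c') 1
      ⊆ {u | u ∈ Ico (0:ℝ) 1 ∧ Int.fract (c - u) < a} := by
    rintro u (hu | hu)
    · simp only [Set.mem_Ioc, lt_max_iff, max_lt_iff] at hu
      obtain ⟨h1, h2⟩ := hu
      have hu0 : 0 < u := h1.2
      have hukey : c' - a < u := h1.1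
      refine ⟨⟨le_of_lt hu0, lt_of_le_of_lt h2 hc'1⟩, ?_⟩
      rw [hfr, Int.fract_eq_self.2 ⟨by linarith, by linarith⟩]
      linarith
    · simp only [Set.mem_Ioo, max_lt_iff] at hu
      obtain ⟨⟨h1, h2⟩, h3⟩ := hu
      refine ⟨⟨by linarith, h3⟩, ?_⟩
      rw [hfr, ← Int.fract_add_one (c' - u), Int.fract_eq_self.2 ⟨by linarith, by linarith⟩]
      linarith
  calc ENNReal.ofReal a
      = volume (Ioc (max (c' - a) 0) c') + volume (Ioo (max (1 + c' - a) c') 1) := by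
        rw [Real.volume_Ioc, Real.volume_Ioo]
        rcases le_or_gt a c' with h | h
        · rw [max_eq_left (by linarith : (0:ℝ) ≤ c' - a), max_eq_left (by linarith : c' ≤ 1 + c' - a)]
          rw [show c' - (c' - a) = a by ring, show (1:ℝ) - (1 + c' - a) = a - c' by ring,
            ENNReal.ofReal_eq_zero.2 (by linarith : a - c' ≤ 0), add_zero]
        · rw [max_eq_right (by linarith : c' - a ≤ 0), max_eq_left (by linarith : c' ≤ 1 + c' - a)]
          rw [show (1:ℝ) - (1 + c' - a) = a - c' by ring, sub_zero,
            ← ENNReal.ofReal_add (by linarith) (by linarith)]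
          norm_num
      _ = volume (Ioc (max (c' - a) 0) c' ∪ Ioo (max (1 + c' - a) c') 1) := by
        rw [measure_union ?_ measurableSet_Ioo]
        refine Set.disjoint_left.2 fun y hy1 hy2 => ?_
        simp only [Set.mem_Ioc, Set.mem_Ioo, max_lt_iff] at hy1 hy2
        linarith [hy1.2, hy2.1.2]
      _ ≤ _ := measure_mono hsub


variable {n : ℕ}

def badSet (y θ : Fin n → ℝ) (μ : Finset (Fin n)) : Set ℝ :=
  {u | ∃ ν, ν ⊆ μ ∧ ν.Nonempty ∧ ∀ j ∈ ν, Int.fract (y j - u) < ∑ k ∈ ν, θ k}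

lemma arcSet_measurable (c a : ℝ) : MeasurableSet {u : ℝ | Int.fract (c - u) < a} :=
  measurableSet_lt (measurable_fract.comp (measurable_const.sub measurable_id)) measurable_const

lemma badSet_measurable (y θ : Fin n → ℝ) (μ : Finset (Fin n)) :
    MeasurableSet (badSet y θ μ) := by
  have : badSet y θ μ = ⋃ (ν : Finset (Fin n)), ⋃ (_ : ν ⊆ μ ∧ ν.Nonempty),
      ⋂ j ∈ ν, {u : ℝ | Int.fract (y j - u) < ∑ k ∈ ν, θ k} := by
    ext u
    simp only [badSet, Set.mem_setOf_eq, Set.mem_iUnion, Set.mem_iInter]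
    constructor
    · rintro ⟨ν, h1, h2, h3⟩; exact ⟨ν, ⟨h1, h2⟩, fun j hj => h3 j hj⟩
    · rintro ⟨ν, ⟨h1, h2⟩, h3⟩; exact ⟨ν, h1, h2, fun j hj => h3 j hj⟩
  rw [this]
  refine MeasurableSet.iUnion fun ν => MeasurableSet.iUnion fun _ =>
    MeasurableSet.biInter (Set.to_countable _) fun j _ => arcSet_measurable _ _

lemma merge_subset (y θ : Fin n → ℝ) (μ : Finset (Fin n)) (j₁ j₂ : Fin n)
    (hj₁ : j₁ ∈ μ) (hj₂ : j₂ ∈ μ) (hne : j₁ ≠ j₂)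
    (hmerge : Int.fract (y j₂ - y j₁) < θ j₂) :
    badSet y (Function.update θ j₂ (θ j₁ + θ j₂)) (μ.erase j₁) ⊆ badSet y θ μ := by
  intro u hu
  obtain ⟨ν', hν'sub, hν'ne, hν'⟩ := hu
  set θ' := Function.update θ j₂ (θ j₁ + θ j₂) with hθ'
  by_cases hj2ν : j₂ ∈ ν'
  · have hj1ν : j₁ ∉ ν' := fun h => (Finset.mem_erase.1 (hν'sub h)).1 rfl
    have hW : ∑ k ∈ ν', θ' k = θ j₁ + ∑ k ∈ ν', θ k := by
      rw [← Finset.add_sum_erase _ θ' hj2ν, ← Finset.add_sum_erase _ θ hj2ν]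
      have h1 : θ' j₂ = θ j₁ + θ j₂ := Function.update_self _ _ _
      have h2 : ∀ k ∈ ν'.erase j₂, θ' k = θ k := fun k hk =>
        Function.update_of_ne (Finset.ne_of_mem_erase hk) _ _
      rw [h1, Finset.sum_congr rfl h2]; ring
    have hd : Int.fract (y j₂ - u) < ∑ k ∈ ν', θ' k := hν' j₂ hj2ν
    rcases lt_or_ge (Int.fract (y j₂ - u)) (θ j₂) with hcase | hcase
    · refine ⟨{j₂}, Finset.singleton_subset_iff.2 hj₂, Finset.singleton_nonempty _, ?_⟩
      intro j hj; rw [Finset.mem_singleton] at hj; subst hj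
      rw [Finset.sum_singleton]; exact hcase
    · have he : Int.fract (y j₂ - y j₁) ≤ Int.fract (y j₂ - u) :=
        le_trans (le_of_lt hmerge) hcase
      have hfr1 : Int.fract (y j₁ - u) = Int.fract (y j₂ - u) - Int.fract (y j₂ - y j₁) := by
        rw [show y j₁ - u = (y j₂ - u) - (y j₂ - y j₁) by ring, fract_sub_of_le he]
      have hsum : ∑ k ∈ insert j₁ ν', θ k = ∑ k ∈ ν', θ' k := by
        rw [Finset.sum_insert hj1ν, hW]
      refine ⟨insert j₁ ν', ?_, ⟨j₁, Finset.mem_insert_self _ _⟩, ?_⟩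
      · intro k hk
        rcases Finset.mem_insert.1 hk with rfl | h
        · exact hj₁
        · exact Finset.mem_of_mem_erase (hν'sub h)
      · intro j hj
        rcases Finset.mem_insert.1 hj with rfl | hj'
        · rw [hsum, hfr1]
          have := Int.fract_nonneg (y j - y j)  -- dummy
          have h0 : (0:ℝ) ≤ Int.fract (y j₂ - y j) := Int.fract_nonneg _
          linarith
        · rw [hsum]; exact hν' j hj'
  · refine ⟨ν', fun k hk => Finset.mem_of_mem_erase (hν'sub hk), hν'ne, ?_⟩
    intro j hj
    have hss : ∑ k ∈ ν', θ k = ∑ k ∈ ν', θ' k :=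
      Finset.sum_congr rfl fun k hk =>
        (Function.update_of_ne (fun h => hj2ν (by rw [← h]; exact hk)) _ _).symm
    rw [hss]; exact hν' j hj

lemma cycle_lemma (y : Fin n → ℝ) (μ : Finset (Fin n)) :
    ∀ (θ : Fin n → ℝ), (∀ j ∈ μ, 0 < θ j) → (∑ j ∈ μ, θ j ≤ 1) →
    ENNReal.ofReal (∑ j ∈ μ, θ j) ≤ volume (badSet y θ μ ∩ Ico 0 1) := by
  induction μ using Finset.strongInduction with
  | _ μ ih =>
    intro θ hpos hsum
    by_cases hms : ∃ j₁ ∈ μ, ∃ j₂ ∈ μ, j₁ ≠ j₂ ∧ Int.fract (y j₂ - y j₁) < θ j₂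
    · obtain ⟨j₁, hj₁, j₂, hj₂, hne, hm⟩ := hms
      set θ' := Function.update θ j₂ (θ j₁ + θ j₂) with hθ'
      have hj₂' : j₂ ∈ μ.erase j₁ := Finset.mem_erase.2 ⟨Ne.symm hne, hj₂⟩
      have hsum' : ∑ k ∈ μ.erase j₁, θ' k = ∑ k ∈ μ, θ k := by
        have h1 : θ' j₂ = θ j₁ + θ j₂ := Function.update_self _ _ _
        rw [← Finset.add_sum_erase _ θ' hj₂', h1,
          ← Finset.add_sum_erase _ θ hj₁, ← Finset.add_sum_erase _ θ hj₂']
        have h2 : ∀ k ∈ (μ.erase j₁).erase j₂, θ' k = θ k := fun k hk =>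
          Function.update_of_ne (Finset.ne_of_mem_erase hk) _ _
        rw [Finset.sum_congr rfl h2]; ring
      have hpos' : ∀ j ∈ μ.erase j₁, 0 < θ' j := by
        intro j hj
        by_cases hjj : j = j₂
        · subst hjj
          have h1 : θ' j = θ j₁ + θ j := Function.update_self _ _ _
          rw [h1]; exact add_pos (hpos _ hj₁) (hpos _ hj₂)
        · have h1 : θ' j = θ j := Function.update_of_ne hjj _ _
          rw [h1]; exact hpos _ (Finset.mem_of_mem_erase hj)
      have hkey := ih (μ.erase j₁) (Finset.erase_ssubset hj₁) θ' hpos'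
        (by rw [hsum']; exact hsum)
      calc ENNReal.ofReal (∑ j ∈ μ, θ j) = ENNReal.ofReal (∑ k ∈ μ.erase j₁, θ' k) := by
            rw [hsum']
        _ ≤ volume (badSet y θ' (μ.erase j₁) ∩ Ico 0 1) := hkey
        _ ≤ volume (badSet y θ μ ∩ Ico 0 1) := measure_mono
            (Set.inter_subset_inter_left _ (merge_subset y θ μ j₁ j₂ hj₁ hj₂ hne hm))
    · push_neg at hms
      set A : Fin n → Set ℝ := fun j => {u | u ∈ Ico (0:ℝ) 1 ∧ Int.fract (y j - u) < θ j}
        with hA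
      have hAmeas : ∀ j, MeasurableSet (A j) :=
        fun j => measurableSet_Ico.inter (arcSet_measurable _ _)
      have hdisj : (↑μ : Set (Fin n)).PairwiseDisjoint A := by
        intro j hj k hk hjk
        refine Set.disjoint_left.2 fun u huj huk => ?_
        rw [hA] at huj huk
        simp only [Set.mem_setOf_eq] at huj huk
        rcases le_or_gt (Int.fract (y j - u)) (Int.fract (y k - u)) with hab | hab
        · have hfr : Int.fract (y k - y j) = Int.fract (y k - u) - Int.fract (y j - u) := by
            rw [show y k - y j = (y k - u) - (y j - u) by ring, fract_sub_of_le hab]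
          have hcon := hms j hj k hk hjk
          have h0 := Int.fract_nonneg (y j - u)
          linarith [huk.2]
        · have hfr : Int.fract (y j - y k) = Int.fract (y j - u) - Int.fract (y k - u) := by
            rw [show y j - y k = (y j - u) - (y k - u) by ring, fract_sub_of_le (le_of_lt hab)]
          have hcon := hms k hk j hj (Ne.symm hjk)
          have h0 := Int.fract_nonneg (y k - u)
          linarith [huj.2]
      calc ENNReal.ofReal (∑ j ∈ μ, θ j) = ∑ j ∈ μ, ENNReal.ofReal (θ j) :=
            ENNReal.ofReal_sum_of_nonneg fun j hj => le_of_lt (hpos j hj)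
        _ ≤ ∑ j ∈ μ, volume (A j) := Finset.sum_le_sum fun j hj =>
            arc_vol (hpos j hj)
              (le_trans (Finset.single_le_sum (fun k hk => le_of_lt (hpos k hk)) hj) hsum)
        _ = volume (⋃ j ∈ μ, A j) := (measure_biUnion_finset hdisj fun j _ => hAmeas j).symm
        _ ≤ volume (badSet y θ μ ∩ Ico 0 1) := by
            refine measure_mono ?_
            intro u hu
            simp only [Set.mem_iUnion] at hu
            obtain ⟨j, hj, huA⟩ := hu
            rw [hA] at huA
            simp only [Set.mem_setOf_eq] at huA
            refine ⟨⟨{j}, Finset.singleton_subset_iff.2 hj, Finset.singleton_nonempty _, ?_⟩,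
              huA.1⟩
            intro k hk; rw [Finset.mem_singleton] at hk; subst hk
            rw [Finset.sum_singleton]; exact huA.2


lemma f_measurable (q u : ℝ) :
    Measurable (fun t : ℝ => if t < q then q * Int.fract (t / q - u) else t) :=
  Measurable.ite (measurableSet_lt measurable_id measurable_const)
    (((measurable_fract.comp ((measurable_id.div_const q).sub measurable_const)).const_mul q))
    measurable_id

/-- The scaled-rotation-inside-`[0,q)` map preserves Lebesgue measure on `[0,1)`. -/
lemma mp1d (q u : ℝ) (hq0 : 0 ≤ q) (hq1 : q ≤ 1) {S : Set ℝ} (hS : MeasurableSet S) :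
    volume ((fun t : ℝ => if t < q then q * Int.fract (t / q - u) else t) ⁻¹' S ∩ Ico 0 1)
      = volume (S ∩ Ico 0 1) := by
  set f := fun t : ℝ => if t < q then q * Int.fract (t / q - u) else t with hf
  rcases eq_or_lt_of_le hq0 with hq | hq
  · have : f ⁻¹' S ∩ Ico 0 1 = S ∩ Ico 0 1 := by
      ext t
      simp only [Set.mem_inter_iff, Set.mem_preimage, Set.mem_Ico]
      have hft : ∀ t : ℝ, 0 ≤ t → f t = t := by
        intro t ht
        rw [hf]
        simp only [if_neg (not_lt.2 (le_trans (le_of_eq hq.symm) ht))]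
      constructor
      · rintro ⟨h1, h2, h3⟩; rw [hft t h2] at h1; exact ⟨h1, h2, h3⟩
      · rintro ⟨h1, h2, h3⟩; rw [hft t h2]; exact ⟨h1, h2, h3⟩
    rw [this]
  · have hqne : q ≠ 0 := ne_of_gt hq
    have hsplit : Ico (0:ℝ) 1 = Ico 0 q ∪ Ico q 1 := (Ico_union_Ico_eq_Ico hq0 hq1).symm
    have hA2 : f ⁻¹' S ∩ Ico q 1 = S ∩ Ico q 1 := by
      ext t
      simp only [Set.mem_inter_iff, Set.mem_preimage, Set.mem_Ico]
      constructor
      · rintro ⟨h1, h2, h3⟩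
        rw [hf] at h1; simp only [if_neg (not_lt.2 h2)] at h1
        exact ⟨h1, h2, h3⟩
      · rintro ⟨h1, h2, h3⟩
        rw [hf]; simp only [if_neg (not_lt.2 h2)]
        exact ⟨h1, h2, h3⟩
    have hA1 : f ⁻¹' S ∩ Ico 0 q
        = (fun t : ℝ => t * q⁻¹) ⁻¹' {s | s ∈ Ico (0:ℝ) 1 ∧ Int.fract (s - u) ∈ (fun w => q * w) ⁻¹' S} := by
      ext t
      simp only [Set.mem_inter_iff, Set.mem_preimage, Set.mem_Ico, Set.mem_setOf_eq]
      constructor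
      · rintro ⟨h1, h2, h3⟩
        have htq : t < q := h3
        rw [hf] at h1; simp only [if_pos htq] at h1
        refine ⟨⟨?_, ?_⟩, ?_⟩
        · positivity
        · rw [← div_eq_mul_inv]; exact (div_lt_one hq).2 htq
        · rw [← div_eq_mul_inv]; exact h1
      · rintro ⟨⟨h1, h2⟩, h3⟩
        rw [← div_eq_mul_inv] at h1 h2 h3
        have htq : t < q := by
          have := (div_lt_one hq).1 h2; linarith
        have ht0 : 0 ≤ t := by
          have := mul_nonneg h1 (le_of_lt hq)
          rwa [div_mul_cancel₀ _ hqne] at this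
        refine ⟨?_, ht0, htq⟩
        rw [hf]; simp only [if_pos htq]
        exact h3
    have hBmeas : MeasurableSet {s | s ∈ Ico (0:ℝ) 1 ∧ Int.fract (s - u) ∈ (fun w => q * w) ⁻¹' S} := by
      refine measurableSet_Ico.inter ?_
      exact (hS.preimage (measurable_const_mul q)).preimage
        (measurable_fract.comp (measurable_id.sub measurable_const))
    have hvolA1 : volume (f ⁻¹' S ∩ Ico 0 q) = volume (S ∩ Ico 0 q) := by
      rw [hA1, Real.volume_preimage_mul_right (inv_ne_zero hqne), inv_inv,
        rot_measure u (hS.preimage (measurable_const_mul q))]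
      have hset : (fun w => q * w) ⁻¹' S ∩ Ico 0 1 = (fun w => q * w) ⁻¹' (S ∩ Ico 0 q) := by
        ext w
        simp only [Set.mem_inter_iff, Set.mem_preimage, Set.mem_Ico]
        constructor
        · rintro ⟨h1, h2, h3⟩
          exact ⟨h1, by positivity, by nlinarith⟩
        · rintro ⟨h1, h2, h3⟩
          have hw1 : w < 1 := by nlinarith
          have hw0 : 0 ≤ w := by nlinarith
          exact ⟨h1, hw0, hw1⟩
      rw [hset, Real.volume_preimage_mul_left hqne, ← mul_assoc,
        ← ENNReal.ofReal_mul (abs_nonneg _), abs_of_pos hq, abs_of_pos (inv_pos.2 hq),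
        mul_inv_cancel₀ hqne]
      simp
    have hfmeas := f_measurable q u
    calc volume (f ⁻¹' S ∩ Ico 0 1)
        = volume (f ⁻¹' S ∩ Ico 0 q) + volume (f ⁻¹' S ∩ Ico q 1) := by
          rw [hsplit, Set.inter_union_distrib_left]
          rw [measure_union ?_ ((hfmeas hS).inter measurableSet_Ico)]
          refine Set.disjoint_left.2 fun t ht1 ht2 => ?_
          simp only [Set.mem_inter_iff, Set.mem_Ico] at ht1 ht2
          linarith [ht1.2.2, ht2.2.1]
      _ = volume (S ∩ Ico 0 q) + volume (S ∩ Ico q 1) := by rw [hvolA1, hA2]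
      _ = volume (S ∩ Ico 0 1) := by
          rw [hsplit, Set.inter_union_distrib_left]
          rw [measure_union ?_ (hS.inter measurableSet_Ico)]
          refine Set.disjoint_left.2 fun t ht1 ht2 => ?_
          simp only [Set.mem_inter_iff, Set.mem_Ico] at ht1 ht2
          linarith [ht1.2.2, ht2.2.1]


noncomputable section Cube

def vol01 : Measure ℝ := volume.restrict (Ico 0 1)

instance : IsProbabilityMeasure vol01 :=
  ⟨by rw [vol01, Measure.restrict_apply MeasurableSet.univ, Set.univ_inter, Real.volume_Ico]; norm_num⟩

variable {n : ℕ}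

def Lam (n : ℕ) : Measure (Fin n → ℝ) := Measure.pi (fun _ => vol01)

instance : IsProbabilityMeasure (Lam n) := by
  rw [Lam]; infer_instance

def Mset (θ q : Fin n → ℝ) : Set (Fin n → ℝ) :=
  {v | ∃ ν : Finset (Fin n), ν.Nonempty ∧ ∀ j ∈ ν, v j < (∑ k ∈ ν, θ k) * q j}

lemma Mset_measurable (θ q : Fin n → ℝ) : MeasurableSet (Mset θ q) := by
  have : Mset θ q = ⋃ (ν : Finset (Fin n)), ⋃ (_ : ν.Nonempty),
      ⋂ j ∈ ν, {v : Fin n → ℝ | v j < (∑ k ∈ ν, θ k) * q j} := by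
    ext v
    simp only [Mset, Set.mem_setOf_eq, Set.mem_iUnion, Set.mem_iInter]
    constructor
    · rintro ⟨ν, h1, h2⟩; exact ⟨ν, h1, fun j hj => h2 j hj⟩
    · rintro ⟨ν, h1, h2⟩; exact ⟨ν, h1, fun j hj => h2 j hj⟩
  rw [this]
  refine MeasurableSet.iUnion fun ν => MeasurableSet.iUnion fun _ =>
    MeasurableSet.biInter (Set.to_countable _) fun j _ => ?_
  exact measurableSet_lt (measurable_pi_apply j) measurable_const

def Tmap (q : Fin n → ℝ) (u : ℝ) : (Fin n → ℝ) → (Fin n → ℝ) :=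
  fun v j => if v j < q j then q j * Int.fract (v j / q j - u) else v j

lemma Tmap_measurable (q : Fin n → ℝ) (u : ℝ) : Measurable (Tmap q u) :=
  measurable_pi_lambda _ fun j => (f_measurable (q j) u).comp (measurable_pi_apply j)

lemma Tmap_mp (q : Fin n → ℝ) (u : ℝ) (hq0 : ∀ j, 0 ≤ q j) (hq1 : ∀ j, q j ≤ 1) :
    Measure.map (Tmap q u) (Lam n) = Lam n := by
  refine (Measure.pi_eq fun s hs => ?_).symm
  rw [Measure.map_apply (Tmap_measurable q u) (MeasurableSet.univ_pi hs)]
  have hpre : Tmap q u ⁻¹' (Set.pi univ s)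
      = Set.pi univ (fun j => (fun t : ℝ => if t < q j then q j * Int.fract (t / q j - u) else t) ⁻¹' s j) := by
    ext v
    simp only [Set.mem_preimage, Set.mem_pi, Set.mem_univ, true_implies, Tmap]
  rw [hpre]
  rw [show (Lam n) = Measure.pi (fun _ => vol01) from rfl, Measure.pi_pi]
  refine Finset.prod_congr rfl fun j _ => ?_
  rw [vol01, Measure.restrict_apply ((hs j).preimage (f_measurable (q j) u)),
    Measure.restrict_apply (hs j), mp1d (q j) u (hq0 j) (hq1 j) (hs j)]

lemma Lam_cyl {S : Set ℝ} (hS : MeasurableSet S) (j : Fin n) :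
    Lam n {v | v j ∈ S} = vol01 S := by
  have hset : {v : Fin n → ℝ | v j ∈ S} = Set.pi univ (fun i => if i = j then S else univ) := by
    ext v
    simp only [Set.mem_pi, Set.mem_setOf_eq, Set.mem_univ, true_implies]
    constructor
    · intro h i
      by_cases hij : i = j
      · rw [if_pos hij, hij]; exact h
      · rw [if_neg hij]; trivial
    · intro h
      have := h j; rw [if_pos rfl] at this; exact this
  rw [hset, show (Lam n) = Measure.pi (fun _ => vol01) from rfl, Measure.pi_pi]
  calc (∏ i, vol01 (if i = j then S else univ))
      = ∏ i, (if i = j then vol01 S else 1) := by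
        refine Finset.prod_congr rfl fun i _ => ?_
        split_ifs <;> simp
    _ = vol01 S := by
        rw [Finset.prod_ite_eq' Finset.univ j (fun _ => vol01 S), if_pos (Finset.mem_univ j)]


lemma step3 (θ q : Fin n → ℝ) (hθpos : ∀ j, 0 < θ j) (hθsum : ∑ j, θ j ≤ 1)
    (hq0 : ∀ j, 0 ≤ q j) (hq1 : ∀ j, q j ≤ 1) :
    ∑ j, ENNReal.ofReal (θ j * q j) ≤ Lam n (Mset θ q) := by
  classical
  have hM : MeasurableSet (Mset θ q) := Mset_measurable θ q
  have hTun : Measurable (fun p : ℝ × (Fin n → ℝ) => Tmap q p.1 p.2) := by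
    refine measurable_pi_lambda _ fun j => ?_
    refine Measurable.ite ?_ ?_ ?_
    · exact measurableSet_lt (measurable_snd.eval) measurable_const
    · exact measurable_const.mul (measurable_fract.comp ((measurable_snd.eval.div_const _).sub
        measurable_fst))
    · exact measurable_snd.eval
  set A : Set (ℝ × (Fin n → ℝ)) := {p | Tmap q p.1 p.2 ∈ Mset θ q} with hA
  have hAmeas : MeasurableSet A := hTun hM
  have h1 : (vol01.prod (Lam n)) A = Lam n (Mset θ q) := by
    rw [Measure.prod_apply hAmeas]
    have hsl : ∀ u : ℝ, Lam n (Prod.mk u ⁻¹' A) = Lam n (Mset θ q) := by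
      intro u
      have : Prod.mk u ⁻¹' A = Tmap q u ⁻¹' Mset θ q := rfl
      rw [this, ← Measure.map_apply (Tmap_measurable q u) hM, Tmap_mp q u hq0 hq1]
    simp_rw [hsl]
    simp
  have h2 : (vol01.prod (Lam n)) A
      = ∫⁻ v, vol01 {u | Tmap q u v ∈ Mset θ q} ∂(Lam n) := by
    rw [Measure.prod_apply_symm hAmeas]
    exact lintegral_congr fun v => rfl
  have h3 : ∀ v : Fin n → ℝ, (∀ j, v j ∈ Ico (0:ℝ) 1) →
      ENNReal.ofReal (∑ j ∈ Finset.univ.filter (fun j => v j < q j), θ j)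
        ≤ vol01 {u | Tmap q u v ∈ Mset θ q} := by
    intro v hv
    set alive := Finset.univ.filter (fun j : Fin n => v j < q j) with halive
    have hsec : MeasurableSet {u | Tmap q u v ∈ Mset θ q} := by
      have : {u | Tmap q u v ∈ Mset θ q} = (fun u => (u, v)) ⁻¹' A := rfl
      rw [this]
      exact hAmeas.preimage (measurable_id.prodMk measurable_const)
    calc ENNReal.ofReal (∑ j ∈ alive, θ j)
        ≤ volume (badSet (fun j => v j / q j) θ alive ∩ Ico 0 1) := by
          refine cycle_lemma _ alive θ (fun j _ => hθpos j) ?_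
          refine le_trans ?_ hθsum
          exact Finset.sum_le_sum_of_subset_of_nonneg (Finset.filter_subset _ _)
            (fun j _ _ => le_of_lt (hθpos j))
      _ ≤ vol01 {u | Tmap q u v ∈ Mset θ q} := by
          rw [vol01, Measure.restrict_apply hsec]
          refine measure_mono ?_
          rintro u ⟨hubad, huIco⟩
          refine ⟨?_, huIco⟩
          obtain ⟨ν, hνsub, hνne, hν⟩ := hubad
          refine ⟨ν, hνne, fun j hj => ?_⟩
          have hjalive : v j < q j := by
            have := hνsub hj
            rw [halive, Finset.mem_filter] at this
            exact this.2
          have hqj : 0 < q j := lt_of_le_of_lt (hv j).1 hjalive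
          have hTj : Tmap q u v j = q j * Int.fract (v j / q j - u) := if_pos hjalive
          rw [hTj, mul_comm (∑ k ∈ ν, θ k) (q j)]
          exact mul_lt_mul_of_pos_left (hν j hj) hqj
  have hae : ∀ᵐ v ∂(Lam n), ∀ j, v j ∈ Ico (0:ℝ) 1 := by
    rw [ae_iff]
    have hsub : {v : Fin n → ℝ | ¬∀ j, v j ∈ Ico (0:ℝ) 1}
        ⊆ ⋃ j, {v : Fin n → ℝ | v j ∈ (Ico (0:ℝ) 1)ᶜ} := by
      intro v hv
      simp only [Set.mem_setOf_eq, not_forall] at hv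
      obtain ⟨j, hj⟩ := hv
      exact Set.mem_iUnion.2 ⟨j, hj⟩
    refine le_antisymm (le_trans (measure_mono hsub) ?_) (zero_le)
    refine le_trans (measure_iUnion_le _) ?_
    have hz : ∀ j : Fin n, Lam n {v : Fin n → ℝ | v j ∈ (Ico (0:ℝ) 1)ᶜ} = 0 := by
      intro j
      rw [Lam_cyl measurableSet_Ico.compl j, vol01,
        Measure.restrict_apply measurableSet_Ico.compl, Set.compl_inter_self]
      simp
    have hz2 : (∑' j : Fin n, Lam n {v : Fin n → ℝ | v j ∈ (Ico (0:ℝ) 1)ᶜ}) = 0 := by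
      rw [tsum_fintype]
      exact Finset.sum_eq_zero fun j _ => hz j
    exact le_of_eq hz2
  have h4 : ∫⁻ v, ENNReal.ofReal (∑ j ∈ Finset.univ.filter (fun j => v j < q j), θ j) ∂(Lam n)
      = ∑ j, ENNReal.ofReal (θ j) * ENNReal.ofReal (q j) := by
    have hcylmeas : ∀ j : Fin n, MeasurableSet {v : Fin n → ℝ | v j < q j} :=
      fun j => measurableSet_lt (measurable_pi_apply j) measurable_const
    have hpt : ∀ v : Fin n → ℝ, ENNReal.ofReal (∑ j ∈ Finset.univ.filter (fun j => v j < q j), θ j)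
        = ∑ j, Set.indicator {v : Fin n → ℝ | v j < q j} (fun _ => ENNReal.ofReal (θ j)) v := by
      intro v
      rw [Finset.sum_filter, ENNReal.ofReal_sum_of_nonneg (fun j _ => by
        split_ifs
        · exact le_of_lt (hθpos j)
        · exact le_refl 0)]
      refine Finset.sum_congr rfl fun j _ => ?_
      rw [Set.indicator_apply]
      by_cases h : v j < q j
      · rw [if_pos h, if_pos (by exact h)]
      · rw [if_neg h, if_neg (by exact h)]
        simp
    simp_rw [hpt]
    rw [lintegral_finset_sum _ (fun j _ => (measurable_const.indicator (hcylmeas j)))]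
    refine Finset.sum_congr rfl fun j _ => ?_
    rw [lintegral_indicator (hcylmeas j), setLIntegral_const]
    have : {v : Fin n → ℝ | v j < q j} = {v : Fin n → ℝ | v j ∈ Iio (q j)} := rfl
    rw [this, Lam_cyl measurableSet_Iio j, vol01, Measure.restrict_apply measurableSet_Iio]
    have : Iio (q j) ∩ Ico 0 1 = Ico 0 (q j) := by
      ext t
      simp only [Set.mem_inter_iff, Set.mem_Iio, Set.mem_Ico]
      constructor
      · rintro ⟨h1, h2, h3⟩; exact ⟨h2, h1⟩
      · rintro ⟨h1, h2⟩; exact ⟨h2, h1, lt_of_lt_of_le h2 (hq1 j)⟩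
    rw [this, Real.volume_Ico, sub_zero]
  calc ∑ j, ENNReal.ofReal (θ j * q j)
      = ∑ j, ENNReal.ofReal (θ j) * ENNReal.ofReal (q j) := by
        refine Finset.sum_congr rfl fun j _ => ?_
        rw [ENNReal.ofReal_mul (le_of_lt (hθpos j))]
    _ = ∫⁻ v, ENNReal.ofReal (∑ j ∈ Finset.univ.filter (fun j => v j < q j), θ j) ∂(Lam n) :=
        h4.symm
    _ ≤ ∫⁻ v, vol01 {u | Tmap q u v ∈ Mset θ q} ∂(Lam n) := by
        refine lintegral_mono_ae ?_
        filter_upwards [hae] with v hv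
        exact h3 v hv
    _ = Lam n (Mset θ q) := by rw [← h2, h1]

end Cube

noncomputable section Quantile

def Fc (κ : Measure ℝ) : ℝ → ℝ := fun v => (κ (Ioi v)).toReal

def psi (κ : Measure ℝ) : ℝ → ℝ := fun t => sInf {v | Fc κ v ≤ t}

def psihat (κ : Measure ℝ) : ℝ → ℝ := fun t => if 0 < t ∧ t < 1 then psi κ t else 0

variable (κ : Measure ℝ) [IsProbabilityMeasure κ]

lemma Fc_antitone : Antitone (Fc κ) := fun v w hvw =>
  ENNReal.toReal_mono (measure_ne_top κ _) (measure_mono (Ioi_subset_Ioi hvw))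

lemma Fc_nonneg (v : ℝ) : 0 ≤ Fc κ v := ENNReal.toReal_nonneg

lemma Fc_le_one (v : ℝ) : Fc κ v ≤ 1 := by
  rw [Fc, show (1:ℝ) = (κ univ).toReal by simp]
  exact ENNReal.toReal_mono (measure_ne_top κ _) (measure_mono (subset_univ _))

lemma S_nonempty {t : ℝ} (ht : 0 < t) : {v | Fc κ v ≤ t}.Nonempty := by
  have hinter : ⋂ k : ℕ, Ioi (k : ℝ) = ∅ := by
    ext x
    simp only [Set.mem_iInter, Set.mem_Ioi, Set.mem_empty_iff_false, iff_false, not_forall,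
      not_lt]
    obtain ⟨k, hk⟩ := exists_nat_gt x
    exact ⟨k, le_of_lt hk⟩
  have htend := tendsto_measure_iInter_atTop (μ := κ) (s := fun k : ℕ => Ioi (k:ℝ))
    (fun k => measurableSet_Ioi.nullMeasurableSet)
    (fun a b hab => Ioi_subset_Ioi (by exact_mod_cast hab)) ⟨0, measure_ne_top κ _⟩
  rw [hinter] at htend
  simp only [measure_empty] at htend
  have hev : ∀ᶠ k : ℕ in Filter.atTop, κ (Ioi (k:ℝ)) < ENNReal.ofReal t :=
    htend.eventually_lt_const (ENNReal.ofReal_pos.2 ht)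
  obtain ⟨k, hk⟩ := hev.exists
  refine ⟨(k:ℝ), ?_⟩
  simp only [Set.mem_setOf_eq, Fc]
  exact ENNReal.toReal_le_of_le_ofReal (le_of_lt ht) (le_of_lt hk)

lemma S_bddBelow (hbelow : ∀ v : ℝ, v < 0 → κ (Ioi v) = 1) {t : ℝ} (ht : t < 1) :
    BddBelow {v | Fc κ v ≤ t} := by
  refine ⟨0, fun v hv => ?_⟩
  by_contra hneg
  push_neg at hneg
  have : Fc κ v = 1 := by rw [Fc, hbelow v hneg, ENNReal.toReal_one]
  rw [Set.mem_setOf_eq, this] at hv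
  linarith

lemma psi_key1 (hbelow : ∀ v : ℝ, v < 0 → κ (Ioi v) = 1) {t c : ℝ} (ht0 : 0 < t) (ht1 : t < 1)
    (h : t < Fc κ c) : c < psi κ t := by
  by_contra hle
  push_neg at hle
  have hne := S_nonempty κ ht0
  have hbdd := S_bddBelow κ hbelow ht1
  have hF : Fc κ (psi κ t) ≤ t := by
    have hk : ∀ k : ℕ, Fc κ (psi κ t + 1/(k+1)) ≤ t := by
      intro k
      have : psi κ t < psi κ t + 1/(k+1) := by
        have : (0:ℝ) < 1/(k+1) := by positivity
        linarith
      obtain ⟨v, hvS, hv⟩ := exists_lt_of_csInf_lt hne this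
      exact le_trans (Fc_antitone κ (le_of_lt hv)) hvS
    have hU : Ioi (psi κ t) = ⋃ k : ℕ, Ioi (psi κ t + 1/(k+1)) := by
      ext w
      simp only [Set.mem_Ioi, Set.mem_iUnion]
      constructor
      · intro hw
        obtain ⟨k, hk'⟩ := exists_nat_one_div_lt (show (0:ℝ) < w - psi κ t by linarith)
        exact ⟨k, by push_cast at hk' ⊢; linarith⟩
      · rintro ⟨k, hk'⟩
        have : (0:ℝ) < 1/(k+1) := by positivity
        linarith
    have hmono : Monotone fun k : ℕ => Ioi (psi κ t + 1/(k+1)) := by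
      intro a b hab
      refine Ioi_subset_Ioi ?_
      have hab' : (a:ℝ) ≤ b := Nat.cast_le.mpr hab
      have h1 : (1:ℝ)/(b+1) ≤ 1/(a+1) := by
        apply one_div_le_one_div_of_le
        · positivity
        · linarith
      linarith
    have : κ (Ioi (psi κ t)) ≤ ENNReal.ofReal t := by
      rw [hU, Directed.measure_iUnion hmono.directed_le]
      refine iSup_le fun k => ?_
      exact (ENNReal.le_ofReal_iff_toReal_le (measure_ne_top κ _) (le_of_lt ht0)).2 (hk k)
    rw [Fc]
    exact ENNReal.toReal_le_of_le_ofReal (le_of_lt ht0) this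
  have := Fc_antitone κ hle
  linarith

lemma psi_key2 (hbelow : ∀ v : ℝ, v < 0 → κ (Ioi v) = 1) {t c : ℝ} (ht1 : t < 1)
    (h : c < psi κ t) : t < Fc κ c := by
  by_contra hle
  push_neg at hle
  have : psi κ t ≤ c := csInf_le (S_bddBelow κ hbelow ht1) hle
  linarith

lemma psihat_measurable (hbelow : ∀ v : ℝ, v < 0 → κ (Ioi v) = 1) :
    Measurable (psihat κ) := by
  refine measurable_of_Ioi fun c => ?_
  have : psihat κ ⁻¹' Ioi c
      = (Ioo 0 1 ∩ Iio (Fc κ c)) ∪ (if c < 0 then (Ioo (0:ℝ) 1)ᶜ else ∅) := by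
    ext t
    simp only [Set.mem_preimage, Set.mem_Ioi, psihat, Set.mem_union, Set.mem_inter_iff,
      Set.mem_Ioo, Set.mem_Iio]
    by_cases hti : 0 < t ∧ t < 1
    · rw [if_pos hti]
      constructor
      · intro h
        exact Or.inl ⟨hti, psi_key2 κ hbelow hti.2 h⟩
      · rintro (⟨_, hF⟩ | hjunk)
        · exact psi_key1 κ hbelow hti.1 hti.2 hF
        · split_ifs at hjunk with hc
          · exact absurd hti hjunk
          · exact absurd hjunk (Set.notMem_empty t)
    · rw [if_neg hti]
      constructor
      · intro h
        refine Or.inr ?_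
        rw [if_pos h]
        exact fun hmem => hti ⟨hmem.1, hmem.2⟩
      · rintro (⟨hmem, _⟩ | hjunk)
        · exact absurd hmem hti
        · split_ifs at hjunk with hc
          · exact hc
          · exact absurd hjunk (Set.notMem_empty t)
  rw [this]
  refine MeasurableSet.union (measurableSet_Ioo.inter measurableSet_Iio) ?_
  split_ifs
  · exact measurableSet_Ioo.compl
  · exact MeasurableSet.empty

lemma psihat_map (hbelow : ∀ v : ℝ, v < 0 → κ (Ioi v) = 1) :
    Measure.map (psihat κ) vol01 = κ := by
  have hmeas := psihat_measurable κ hbelow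
  have hIoi : ∀ a : ℝ, vol01 (psihat κ ⁻¹' Ioi a) = κ (Ioi a) := by
    intro a
    rw [vol01, Measure.restrict_apply (hmeas measurableSet_Ioi)]
    have hsub1 : Ioo 0 (min (Fc κ a) 1) ⊆ psihat κ ⁻¹' Ioi a ∩ Ico 0 1 := by
      rintro t ⟨ht0, htm⟩
      have ht1 : t < 1 := lt_of_lt_of_le htm (min_le_right _ _)
      have htF : t < Fc κ a := lt_of_lt_of_le htm (min_le_left _ _)
      refine ⟨?_, le_of_lt ht0, ht1⟩
      simp only [Set.mem_preimage, Set.mem_Ioi, psihat, if_pos (⟨ht0, ht1⟩ : 0 < t ∧ t < 1)]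
      exact psi_key1 κ hbelow ht0 ht1 htF
    have hsub2 : psihat κ ⁻¹' Ioi a ∩ Ico 0 1 ⊆ Ioo 0 (min (Fc κ a) 1) ∪ {0} := by
      rintro t ⟨htpre, ht0, ht1⟩
      rcases eq_or_lt_of_le ht0 with h0 | h0
      · exact Or.inr (by simp [← h0])
      · refine Or.inl ⟨h0, lt_min ?_ ht1⟩
        simp only [Set.mem_preimage, Set.mem_Ioi, psihat,
          if_pos (⟨h0, ht1⟩ : 0 < t ∧ t < 1)] at htpre
        exact psi_key2 κ hbelow ht1 htpre
    have hvol1 : volume (Ioo 0 (min (Fc κ a) 1)) = ENNReal.ofReal (Fc κ a) := by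
      rw [Real.volume_Ioo, sub_zero]
      rcases le_total (Fc κ a) 1 with h | h
      · rw [min_eq_left h]
      · rw [min_eq_right h]
        rw [show Fc κ a = 1 from le_antisymm (Fc_le_one κ a) h]
    have hle1 := measure_mono (μ := volume) hsub1
    have hle2 := le_trans (measure_mono (μ := volume) hsub2) (measure_union_le (μ := volume) _ _)
    rw [hvol1] at hle1
    have : volume ({(0:ℝ)} : Set ℝ) = 0 := Real.volume_singleton
    rw [hvol1, this, add_zero] at hle2
    have := le_antisymm hle2 hle1
    rw [this, Fc, ENNReal.ofReal_toReal (measure_ne_top κ _)]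
  haveI : IsProbabilityMeasure (Measure.map (psihat κ) vol01) :=
    Measure.isProbabilityMeasure_map hmeas.aemeasurable
  refine Measure.ext_of_Iic _ _ fun a => ?_
  have h1 : Measure.map (psihat κ) vol01 (Iic a)
      = 1 - Measure.map (psihat κ) vol01 (Ioi a) := by
    rw [show Iic a = (Ioi a)ᶜ from compl_Ioi.symm,
      measure_compl measurableSet_Ioi (measure_ne_top _ _), measure_univ]
  have h2 : κ (Iic a) = 1 - κ (Ioi a) := by
    rw [show Iic a = (Ioi a)ᶜ from compl_Ioi.symm,
      measure_compl measurableSet_Ioi (measure_ne_top _ _), measure_univ]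
  rw [h1, h2, Measure.map_apply hmeas measurableSet_Ioi, hIoi a]

end Quantile

end DSLB

open DSLB Set

/-- lower bound for the survival function of the diversified portfolio
at points where the subscalability inequalities hold for all relevant subset weights. -/
theorem diversified_survival_lower_bound
    {Ω : Type*} [MeasurableSpace Ω] (P : Measure Ω) [IsProbabilityMeasure P]
    (n : ℕ) (hn : 2 ≤ n)
    (X : Fin n → Ω → ℝ) (hXmeas : ∀ i, Measurable (X i)) (hXpos : ∀ i ω, 0 ≤ X i ω)
    (hIndep : iIndepFun X P)
    (θ : Fin n → ℝ) (hθ : ∀ i, θ i ∈ Set.Ioo (0 : ℝ) 1) (hθsum : ∑ i, θ i = 1)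
    (x : ℝ) (hx : 0 ≤ x)
    (hcond : ∀ i : Fin n, ∀ μ : Finset (Fin n), i ∈ μ → μ ≠ Finset.univ →
      ENNReal.ofReal (∑ j ∈ μ, θ j) * P {ω | X i ω > x} ≤
        P {ω | X i ω > x / (∑ j ∈ μ, θ j)}) :
    ∑ i, ENNReal.ofReal (θ i) * P {ω | X i ω > x} ≤
      P {ω | ∑ i, θ i * X i ω > x} := by
  classical
  rcases eq_or_lt_of_le hx with hx0 | hx0
  · -- the case x = 0
    have hx0' : x = 0 := hx0.symm
    subst hx0'
    have hsub : ∀ i, {ω | X i ω > 0} ⊆ {ω | ∑ j, θ j * X j ω > 0} := by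
      intro i ω hω
      simp only [Set.mem_setOf_eq] at hω ⊢
      have hterm : 0 < θ i * X i ω := mul_pos (hθ i).1 hω
      have hle : θ i * X i ω ≤ ∑ j, θ j * X j ω :=
        Finset.single_le_sum (f := fun j => θ j * X j ω)
          (fun j _ => mul_nonneg (le_of_lt (hθ j).1) (hXpos j ω)) (Finset.mem_univ i)
      linarith
    calc ∑ i, ENNReal.ofReal (θ i) * P {ω | X i ω > 0}
        ≤ ∑ i, ENNReal.ofReal (θ i) * P {ω | ∑ j, θ j * X j ω > 0} :=
          Finset.sum_le_sum fun i _ => mul_le_mul_right (measure_mono (hsub i)) _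
      _ = (∑ i, ENNReal.ofReal (θ i)) * P {ω | ∑ j, θ j * X j ω > 0} :=
          (Finset.sum_mul _ _ _).symm
      _ = 1 * P {ω | ∑ j, θ j * X j ω > 0} := by
          rw [← ENNReal.ofReal_sum_of_nonneg (fun i _ => le_of_lt (hθ i).1), hθsum,
            ENNReal.ofReal_one]
      _ = P {ω | ∑ j, θ j * X j ω > 0} := one_mul _
  · -- the case x > 0
    set κ : Fin n → Measure ℝ := fun j => P.map (X j) with hκ
    haveI hPM : ∀ j, IsProbabilityMeasure (κ j) := fun j =>
      Measure.isProbabilityMeasure_map (hXmeas j).aemeasurable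
    have hbelow : ∀ j, ∀ v : ℝ, v < 0 → κ j (Ioi v) = 1 := by
      intro j v hv
      rw [hκ, Measure.map_apply (hXmeas j) measurableSet_Ioi]
      have hset : (X j) ⁻¹' (Ioi v) = Set.univ := by
        ext ω
        simp only [Set.mem_preimage, Set.mem_Ioi, Set.mem_univ, iff_true]
        exact lt_of_lt_of_le hv (hXpos j ω)
      rw [hset, measure_univ]
    have hκIoi : ∀ (j : Fin n) (c : ℝ), κ j (Ioi c) = P {ω | X j ω > c} := by
      intro j c
      rw [hκ, Measure.map_apply (hXmeas j) measurableSet_Ioi]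
      rfl
    set q : Fin n → ℝ := fun j => (P {ω | X j ω > x}).toReal with hq
    have hq0 : ∀ j, 0 ≤ q j := fun j => ENNReal.toReal_nonneg
    have hq1 : ∀ j, q j ≤ 1 := fun j => by
      rw [hq]
      exact ENNReal.toReal_le_of_le_ofReal zero_le_one
        (by rw [ENNReal.ofReal_one]; exact prob_le_one)
    set vec : Ω → (Fin n → ℝ) := fun ω j => X j ω with hvec
    have hvecmeas : Measurable vec := measurable_pi_lambda _ fun j => hXmeas j
    have hjoint : Measure.pi κ = P.map vec := by
      refine Measure.pi_eq fun s hs => ?_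
      rw [Measure.map_apply hvecmeas (MeasurableSet.univ_pi hs)]
      have hpre : vec ⁻¹' (Set.pi univ s) = ⋂ j ∈ Finset.univ, (X j) ⁻¹' (s j) := by
        ext ω
        simp only [Set.mem_preimage, Set.mem_pi, Set.mem_univ, true_implies, Set.mem_iInter,
          Finset.mem_univ, hvec]
      rw [hpre, hIndep.measure_inter_preimage_eq_mul Finset.univ (fun j _ => hs j)]
      exact Finset.prod_congr rfl fun j _ =>
        (Measure.map_apply (hXmeas j) (hs j)).symm
    set θF : Finset (Fin n) → ℝ := fun ν => ∑ k ∈ ν, θ k with hθF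
    have hθFpos : ∀ {ν : Finset (Fin n)}, ν.Nonempty → 0 < θF ν := fun hν =>
      Finset.sum_pos (fun k _ => (hθ k).1) hν
    have hsurv : ∀ (j : Fin n) (ν : Finset (Fin n)), ν.Nonempty → j ∈ ν →
        θF ν * q j ≤ Fc (κ j) (x / θF ν) := by
      intro j ν hνne hjν
      have hFc : Fc (κ j) (x / θF ν) = (P {ω | X j ω > x / θF ν}).toReal := by
        rw [Fc, hκIoi]
      by_cases hν : ν = Finset.univ
      · have huniv : θF ν = 1 := by rw [hν, hθF]; exact hθsum
        rw [hFc, huniv, one_mul, div_one]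
      · have hc := hcond j ν hjν hν
        rw [hFc]
        calc θF ν * q j = (ENNReal.ofReal (θF ν) * P {ω | X j ω > x}).toReal := by
              rw [ENNReal.toReal_mul, ENNReal.toReal_ofReal (le_of_lt (hθFpos hνne))]
          _ ≤ (P {ω | X j ω > x / θF ν}).toReal :=
              ENNReal.toReal_mono (measure_ne_top _ _) hc
    set Gset : Set (Fin n → ℝ) :=
      {v | ∃ ν : Finset (Fin n), ν.Nonempty ∧ ∀ j ∈ ν, x / θF ν < v j} with hGset
    have hGmeas : MeasurableSet Gset := by
      have : Gset = ⋃ (ν : Finset (Fin n)), ⋃ (_ : ν.Nonempty),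
          ⋂ j ∈ ν, {v : Fin n → ℝ | x / θF ν < v j} := by
        ext v
        simp only [hGset, Set.mem_setOf_eq, Set.mem_iUnion, Set.mem_iInter]
        constructor
        · rintro ⟨ν, h1, h2⟩; exact ⟨ν, h1, fun j hj => h2 j hj⟩
        · rintro ⟨ν, h1, h2⟩; exact ⟨ν, h1, fun j hj => h2 j hj⟩
      rw [this]
      refine MeasurableSet.iUnion fun ν => MeasurableSet.iUnion fun _ =>
        MeasurableSet.biInter (Set.to_countable _) fun j _ =>
          measurableSet_lt measurable_const (measurable_pi_apply j)
    have hincl : vec ⁻¹' Gset ⊆ {ω | ∑ i, θ i * X i ω > x} := by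
      intro ω hω
      obtain ⟨ν, hνne, hν⟩ := hω
      simp only [Set.mem_setOf_eq]
      have hposF := hθFpos hνne
      have hxeq : x = ∑ j ∈ ν, θ j * (x / θF ν) := by
        rw [← Finset.sum_mul]
        rw [show (∑ j ∈ ν, θ j) = θF ν from rfl]
        field_simp
      have hlt : x < ∑ j ∈ ν, θ j * X j ω := by
        rw [hxeq]
        refine Finset.sum_lt_sum_of_nonempty hνne fun j hj => ?_
        exact mul_lt_mul_of_pos_left (hν j hj) (hθ j).1
      have hle : ∑ j ∈ ν, θ j * X j ω ≤ ∑ i, θ i * X i ω :=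
        Finset.sum_le_sum_of_subset_of_nonneg (Finset.subset_univ ν)
          (fun i _ _ => mul_nonneg (le_of_lt (hθ i).1) (hXpos i ω))
      linarith
    set Psi : (Fin n → ℝ) → (Fin n → ℝ) := fun w j => psihat (κ j) (w j) with hPsi
    have hPsimeas : Measurable Psi := measurable_pi_lambda _ fun j =>
      (psihat_measurable (κ j) (hbelow j)).comp (measurable_pi_apply j)
    have hPsimap : Measure.map Psi (Lam n) = Measure.pi κ := by
      refine (Measure.pi_eq fun s hs => ?_).symm
      rw [Measure.map_apply hPsimeas (MeasurableSet.univ_pi hs)]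
      have hpre : Psi ⁻¹' (Set.pi univ s) = Set.pi univ (fun j => psihat (κ j) ⁻¹' s j) := by
        ext w
        simp only [Set.mem_preimage, Set.mem_pi, Set.mem_univ, true_implies, hPsi]
      rw [hpre, show (Lam n) = Measure.pi (fun _ => vol01) from rfl, Measure.pi_pi]
      refine Finset.prod_congr rfl fun j _ => ?_
      rw [← Measure.map_apply (psihat_measurable (κ j) (hbelow j)) (hs j),
        psihat_map (κ j) (hbelow j)]
    set D : Set (Fin n → ℝ) := {v | ∀ j, 0 < v j ∧ v j < 1} with hD
    have hMsub : Mset θ q ∩ D ⊆ Psi ⁻¹' Gset := by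
      rintro v ⟨⟨ν, hνne, hν⟩, hvD⟩
      refine ⟨ν, hνne, fun j hj => ?_⟩
      have h1 : v j < Fc (κ j) (x / θF ν) :=
        lt_of_lt_of_le (hν j hj) (hsurv j ν hνne hj)
      have h2 := psi_key1 (κ j) (hbelow j) (hvD j).1 (hvD j).2 h1
      show x / θF ν < Psi v j
      rw [hPsi]
      simp only [psihat, if_pos (⟨(hvD j).1, (hvD j).2⟩ : 0 < v j ∧ v j < 1)]
      exact h2
    have hDnull : Lam n Dᶜ = 0 := by
      have hsub2 : Dᶜ ⊆ ⋃ j, {v : Fin n → ℝ | v j ∈ ({t : ℝ | 0 < t ∧ t < 1})ᶜ} := by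
        intro v hv
        simp only [hD, Set.mem_compl_iff, Set.mem_setOf_eq, not_forall] at hv
        obtain ⟨j, hj⟩ := hv
        exact Set.mem_iUnion.2 ⟨j, hj⟩
      refine le_antisymm (le_trans (measure_mono hsub2) ?_) (zero_le)
      refine le_trans (measure_iUnion_le _) ?_
      have hmeasIoo : MeasurableSet ({t : ℝ | 0 < t ∧ t < 1}) := by
        have : {t : ℝ | 0 < t ∧ t < 1} = Ioo 0 1 := rfl
        rw [this]; exact measurableSet_Ioo
      have hz : ∀ j : Fin n, Lam n {v : Fin n → ℝ | v j ∈ ({t : ℝ | 0 < t ∧ t < 1})ᶜ} = 0 := by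
        intro j
        rw [Lam_cyl hmeasIoo.compl j, vol01, Measure.restrict_apply hmeasIoo.compl]
        have : {t : ℝ | 0 < t ∧ t < 1}ᶜ ∩ Ico 0 1 = {(0:ℝ)} := by
          ext t
          simp only [Set.mem_inter_iff, Set.mem_compl_iff, Set.mem_setOf_eq, Set.mem_Ico,
            Set.mem_singleton_iff, not_and, not_lt]
          constructor
          · rintro ⟨h1, h2, h3⟩
            by_contra hne
            have ht0 : 0 < t := lt_of_le_of_ne h2 (Ne.symm hne)
            linarith [h1 ht0]
          · rintro rfl
            exact ⟨fun h => absurd h (lt_irrefl 0), le_refl 0, one_pos⟩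
        rw [this, Real.volume_singleton]
      have hz2 : (∑' j : Fin n, Lam n {v : Fin n → ℝ | v j ∈ ({t : ℝ | 0 < t ∧ t < 1})ᶜ}) = 0 := by
        rw [tsum_fintype]
        exact Finset.sum_eq_zero fun j _ => hz j
      exact le_of_eq hz2
    have hMD : Lam n (Mset θ q) ≤ Lam n (Mset θ q ∩ D) := by
      calc Lam n (Mset θ q) ≤ Lam n ((Mset θ q ∩ D) ∪ Dᶜ) := by
            refine measure_mono fun v hv => ?_
            by_cases hvD : v ∈ D
            · exact Or.inl ⟨hv, hvD⟩
            · exact Or.inr hvD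
        _ ≤ Lam n (Mset θ q ∩ D) + Lam n Dᶜ := measure_union_le _ _
        _ = Lam n (Mset θ q ∩ D) := by rw [hDnull, add_zero]
    calc ∑ i, ENNReal.ofReal (θ i) * P {ω | X i ω > x}
        = ∑ i, ENNReal.ofReal (θ i * q i) := by
          refine Finset.sum_congr rfl fun i _ => ?_
          rw [ENNReal.ofReal_mul (le_of_lt (hθ i).1), hq,
            ENNReal.ofReal_toReal (measure_ne_top _ _)]
      _ ≤ Lam n (Mset θ q) := step3 θ q (fun j => (hθ j).1) (le_of_eq hθsum) hq0 hq1
      _ ≤ Lam n (Mset θ q ∩ D) := hMD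
      _ ≤ Lam n (Psi ⁻¹' Gset) := measure_mono hMsub
      _ = Measure.map Psi (Lam n) Gset := (Measure.map_apply hPsimeas hGmeas).symm
      _ = Measure.pi κ Gset := by rw [hPsimap]
      _ = P.map vec Gset := by rw [hjoint]
      _ = P (vec ⁻¹' Gset) := Measure.map_apply hvecmeas hGmeas
      _ ≤ P {ω | ∑ i, θ i * X i ω > x} := measure_mono hincl
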